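/- Let p = N(μ₁, v₁) and q = N(μ₂, v₂) be real Gaussian measures with v₁, v₂ > 0, and write σ₁ = √v₁, σ₂ = √v₂. Then for every coupling γ of p and q (a probability measure on ℝ × ℝ with first marginal p and second marginal q), one has ∫ (x − y)² dγ(x, y) ≥ (μ₁ − μ₂)² + (σ₁ − σ₂)², where the left-hand integral is taken in the sense of the lower Lebesgue integral (so it may be infinite). -/

import Mathlib

open MeasureTheory Real Set Filter ProbabilityTheory
open scoped NNReal ENNReal Topology


lemma aux_integral_sq_mul_exp_neg_mul_sq {b : ℝ} (hb : 0 < b) :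
    ∫ x : ℝ, x ^ 2 * Real.exp (-b * x ^ 2) = (2 * b)⁻¹ * Real.sqrt (π / b) := by
  set g : ℝ → ℝ := fun x => -(2 * b)⁻¹ * x * Real.exp (-b * x ^ 2) with hg
  set f' : ℝ → ℝ := fun x => x ^ 2 * Real.exp (-b * x ^ 2)
      - (2 * b)⁻¹ * Real.exp (-b * x ^ 2) with hf'
  have hint_sq : Integrable (fun x : ℝ => x ^ 2 * Real.exp (-b * x ^ 2)) := by
    have := integrable_rpow_mul_exp_neg_mul_sq hb (s := 2) (by norm_num)
    simpa [Real.rpow_natCast] using this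
  have hint_e : Integrable (fun x : ℝ => Real.exp (-b * x ^ 2)) :=
    integrable_exp_neg_mul_sq hb
  have hint_f' : Integrable f' := hint_sq.sub (hint_e.const_mul _)
  have hderiv : ∀ x : ℝ, HasDerivAt g (f' x) x := by
    intro x
    have h1 : HasDerivAt (fun x : ℝ => -b * x ^ 2) (-b * (2 * x)) x := by
      simpa using ((hasDerivAt_pow 2 x).const_mul (-b))
    have h2 : HasDerivAt (fun x : ℝ => Real.exp (-b * x ^ 2))
        (Real.exp (-b * x ^ 2) * (-b * (2 * x))) x := h1.exp
    have h3 : HasDerivAt (fun x : ℝ => -(2 * b)⁻¹ * x) (-(2 * b)⁻¹) x := by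
      simpa using (hasDerivAt_id x).const_mul (-(2 * b)⁻¹)
    have : HasDerivAt (fun y : ℝ => -(2 * b)⁻¹ * y * Real.exp (-b * y ^ 2)) _ x := h3.mul h2
    convert this using 1
    have hb0 : b ≠ 0 := hb.ne'
    show x ^ 2 * Real.exp (-b * x ^ 2) - (2 * b)⁻¹ * Real.exp (-b * x ^ 2) = _
    field_simp
    ring
  have htop : Tendsto g atTop (𝓝 0) := by
    have ho := rpow_mul_exp_neg_mul_sq_isLittleO_exp_neg hb (1 : ℝ)
    have hexp : Tendsto (fun x : ℝ => Real.exp (-(1/2 : ℝ) * x)) atTop (𝓝 0) :=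
      Real.tendsto_exp_atBot.comp (tendsto_id.const_mul_atTop_of_neg (by norm_num))
    have h0 : Tendsto (fun x : ℝ => x ^ (1:ℝ) * Real.exp (-b * x ^ 2)) atTop (𝓝 0) :=
      ho.trans_tendsto hexp
    have h1 : Tendsto (fun x : ℝ => x * Real.exp (-b * x ^ 2)) atTop (𝓝 0) := by
      refine h0.congr' ?_
      filter_upwards [eventually_ge_atTop (0:ℝ)] with x hx
      rw [Real.rpow_one]
    have := h1.const_mul (-(2 * b)⁻¹)
    simpa [hg, mul_assoc] using this
  have hbot : Tendsto g atBot (𝓝 0) := by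
    have : Tendsto (fun x : ℝ => g (-x)) atTop (𝓝 0) := by
      have := htop.neg
      simp only [neg_zero] at this
      refine this.congr fun x => ?_
      simp [hg]
    have h2 := this.comp tendsto_neg_atBot_atTop
    simpa [Function.comp_def] using h2
  have hIoi : ∫ x in Ioi (0:ℝ), f' x = 0 - g 0 :=
    integral_Ioi_of_hasDerivAt_of_tendsto (hderiv 0).continuousAt.continuousWithinAt
      (fun x _ => hderiv x) hint_f'.integrableOn htop
  have hIic : ∫ x in Iic (0:ℝ), f' x = g 0 - 0 :=
    integral_Iic_of_hasDerivAt_of_tendsto (hderiv 0).continuousAt.continuousWithinAt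
      (fun x _ => hderiv x) hint_f'.integrableOn hbot
  have hR : ∫ x : ℝ, f' x = 0 := by
    rw [← intervalIntegral.integral_Iic_add_Ioi hint_f'.integrableOn hint_f'.integrableOn, hIoi, hIic]
    ring
  have hsub : ∫ x : ℝ, f' x
      = (∫ x : ℝ, x ^ 2 * Real.exp (-b * x ^ 2)) - (2*b)⁻¹ * ∫ x : ℝ, Real.exp (-b * x ^ 2) := by
    rw [integral_sub hint_sq (hint_e.const_mul _), integral_const_mul]
  rw [hR, integral_gaussian] at hsub
  linarith

lemma aux_odd_integral {b : ℝ} : ∫ x : ℝ, x * Real.exp (-b * x ^ 2) = 0 := by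
  have h := integral_neg_eq_self (fun x : ℝ => x * Real.exp (-b * x ^ 2)) volume
  simp only [neg_sq, neg_mul, integral_neg] at h
  simp only [neg_mul]
  linarith

lemma aux_integral_gaussianReal (μ : ℝ) {v : ℝ≥0} (hv : v ≠ 0) (f : ℝ → ℝ) :
    ∫ x, f x ∂(gaussianReal μ v)
      = ∫ x, gaussianPDFReal μ v x * f x := by
  rw [gaussianReal_of_var_ne_zero _ hv]
  have hpdf : gaussianPDF μ v
      = fun x => ((gaussianPDFReal μ v x).toNNReal : ℝ≥0∞) := rfl
  rw [hpdf, integral_withDensity_eq_integral_smul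
    (measurable_gaussianPDFReal μ v).real_toNNReal f]
  refine integral_congr_ae (Filter.Eventually.of_forall fun x => ?_)
  simp [NNReal.smul_def, Real.coe_toNNReal _ (gaussianPDFReal_nonneg μ v x)]

lemma aux_integrable_gaussianReal_iff (μ : ℝ) {v : ℝ≥0} (hv : v ≠ 0) (f : ℝ → ℝ) :
    Integrable f (gaussianReal μ v)
      ↔ Integrable (fun x => gaussianPDFReal μ v x * f x) volume := by
  rw [gaussianReal_of_var_ne_zero _ hv]
  have hpdf : gaussianPDF μ v
      = fun x => ((gaussianPDFReal μ v x).toNNReal : ℝ≥0∞) := rfl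
  rw [hpdf, integrable_withDensity_iff_integrable_smul
    (measurable_gaussianPDFReal μ v).real_toNNReal]
  refine integrable_congr (Filter.Eventually.of_forall fun x => ?_)
  simp [NNReal.smul_def, Real.coe_toNNReal _ (gaussianPDFReal_nonneg μ v x)]

lemma aux_pdf_eq (μ : ℝ) (v : ℝ≥0) (x : ℝ) :
    gaussianPDFReal μ v x
      = (Real.sqrt (2 * π * v))⁻¹ * Real.exp (-(2 * (v:ℝ))⁻¹ * (x - μ) ^ 2) := by
  rw [gaussianPDFReal]
  congr 1
  ring_nf

lemma aux_norm {v : ℝ≥0} (hv : 0 < v) :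
    (Real.sqrt (2 * π * v))⁻¹ * Real.sqrt (π / (2 * (v:ℝ))⁻¹) = 1 := by
  have hvpos : (0:ℝ) < v := hv
  have h1 : π / (2 * (v:ℝ))⁻¹ = 2 * π * v := by
    field_simp
  rw [h1]
  exact inv_mul_cancel₀ (Real.sqrt_ne_zero'.mpr (by positivity))

lemma aux_integral_id (μ : ℝ) {v : ℝ≥0} (hv : 0 < v) :
    ∫ x, x ∂(gaussianReal μ v) = μ := by
  have hvpos : (0:ℝ) < v := hv
  have hb : (0:ℝ) < (2 * (v:ℝ))⁻¹ := by positivity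
  rw [aux_integral_gaussianReal μ hv.ne']
  set F : ℝ → ℝ := fun y => (Real.sqrt (2 * π * v))⁻¹ * (y * Real.exp (-(2 * (v:ℝ))⁻¹ * y ^ 2))
          + ((Real.sqrt (2 * π * v))⁻¹ * μ) * Real.exp (-(2 * (v:ℝ))⁻¹ * y ^ 2) with hFdef
  have hF : (fun x => gaussianPDFReal μ v x * x) = fun x => F (x - μ) := by
    funext x
    rw [hFdef, aux_pdf_eq]
    ring
  rw [hF, integral_sub_right_eq_self F μ, hFdef,
    integral_add (((integrable_mul_exp_neg_mul_sq hb).const_mul _))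
      ((integrable_exp_neg_mul_sq hb).const_mul _),
    integral_const_mul, integral_const_mul, aux_odd_integral, integral_gaussian]
  have := aux_norm hv
  linear_combination μ * this

lemma aux_integral_sq' (μ : ℝ) {v : ℝ≥0} (hv : 0 < v) :
    ∫ x, (x - μ) ^ 2 ∂(gaussianReal μ v) = v := by
  have hvpos : (0:ℝ) < v := hv
  have hb : (0:ℝ) < (2 * (v:ℝ))⁻¹ := by positivity
  rw [aux_integral_gaussianReal μ hv.ne']
  set F : ℝ → ℝ := fun y => (Real.sqrt (2 * π * v))⁻¹
          * (y ^ 2 * Real.exp (-(2 * (v:ℝ))⁻¹ * y ^ 2)) with hFdef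
  have hF : (fun x => gaussianPDFReal μ v x * (x - μ) ^ 2) = fun x => F (x - μ) := by
    funext x
    rw [hFdef, aux_pdf_eq]
    ring
  rw [hF, integral_sub_right_eq_self F μ, hFdef, integral_const_mul,
    aux_integral_sq_mul_exp_neg_mul_sq hb]
  have h2 : (2 * (2 * (v:ℝ))⁻¹)⁻¹ = v := by
    field_simp
  rw [h2]
  have := aux_norm hv
  linear_combination (v:ℝ) * this

lemma aux_memLp_two (μ : ℝ) {v : ℝ≥0} (hv : 0 < v) :
    MemLp (id : ℝ → ℝ) 2 (gaussianReal μ v) := by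
  have hvpos : (0:ℝ) < v := hv
  have hb : (0:ℝ) < (2 * (v:ℝ))⁻¹ := by positivity
  rw [memLp_two_iff_integrable_sq aestronglyMeasurable_id]
  rw [show (fun x : ℝ => id x ^ 2) = fun x : ℝ => x ^ 2 from rfl]
  rw [aux_integrable_gaussianReal_iff μ hv.ne']
  have hint_sq : Integrable (fun y : ℝ => y ^ 2 * Real.exp (-(2 * (v:ℝ))⁻¹ * y ^ 2)) := by
    have := integrable_rpow_mul_exp_neg_mul_sq hb (s := 2) (by norm_num)
    simpa [Real.rpow_natCast] using this
  set F : ℝ → ℝ := fun y => (Real.sqrt (2 * π * v))⁻¹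
            * (y ^ 2 * Real.exp (-(2 * (v:ℝ))⁻¹ * y ^ 2))
          + (2 * (Real.sqrt (2 * π * v))⁻¹ * μ)
            * (y * Real.exp (-(2 * (v:ℝ))⁻¹ * y ^ 2))
          + ((Real.sqrt (2 * π * v))⁻¹ * μ ^ 2)
            * Real.exp (-(2 * (v:ℝ))⁻¹ * y ^ 2) with hFdef
  have hF : (fun x => gaussianPDFReal μ v x * x ^ 2) = fun x => F (x - μ) := by
    funext x
    rw [hFdef, aux_pdf_eq]
    ring
  rw [hF]
  refine Integrable.comp_sub_right ?_ μ
  rw [hFdef]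
  exact ((hint_sq.const_mul _).add
    ((integrable_mul_exp_neg_mul_sq hb).const_mul _)).add
    ((integrable_exp_neg_mul_sq hb).const_mul _)

/-- For Gaussians `p = N(μ₁, v₁)` and `q = N(μ₂, v₂)` with `σᵢ = √vᵢ`, every coupling `γ`
of `p` and `q` has quadratic transport cost (lower Lebesgue integral, possibly infinite)
at least `(μ₁ − μ₂)² + (σ₁ − σ₂)²`. -/
theorem gaussian_coupling_quadratic_cost_lower_bound
    (μ₁ μ₂ : ℝ) (v₁ v₂ : ℝ≥0) (hv₁ : 0 < v₁) (hv₂ : 0 < v₂)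
    (σ₁ σ₂ : ℝ) (hσ₁ : σ₁ = Real.sqrt v₁) (hσ₂ : σ₂ = Real.sqrt v₂)
    (γ : Measure (ℝ × ℝ)) [IsProbabilityMeasure γ]
    (hγ₁ : γ.map Prod.fst = gaussianReal μ₁ v₁)
    (hγ₂ : γ.map Prod.snd = gaussianReal μ₂ v₂) :
    ENNReal.ofReal ((μ₁ - μ₂) ^ 2 + (σ₁ - σ₂) ^ 2) ≤
      ∫⁻ z : ℝ × ℝ, ENNReal.ofReal ((z.1 - z.2) ^ 2) ∂γ := by
  have hmfst : AEMeasurable (Prod.fst : ℝ × ℝ → ℝ) γ := measurable_fst.aemeasurable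
  have hmsnd : AEMeasurable (Prod.snd : ℝ × ℝ → ℝ) γ := measurable_snd.aemeasurable
  have hX : MemLp (fun z : ℝ × ℝ => z.1) 2 γ := by
    have h := aux_memLp_two μ₁ hv₁
    rw [← hγ₁] at h
    exact (memLp_map_measure_iff aestronglyMeasurable_id hmfst).mp h
  have hY : MemLp (fun z : ℝ × ℝ => z.2) 2 γ := by
    have h := aux_memLp_two μ₂ hv₂
    rw [← hγ₂] at h
    exact (memLp_map_measure_iff aestronglyMeasurable_id hmsnd).mp h
  set A : ℝ × ℝ → ℝ := fun z => z.1 - μ₁ with hAdef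
  set B : ℝ × ℝ → ℝ := fun z => z.2 - μ₂ with hBdef
  have hA : MemLp A 2 γ := hX.sub (memLp_const μ₁)
  have hB : MemLp B 2 γ := hY.sub (memLp_const μ₂)
  have hA2 : Integrable (fun z => A z ^ 2) γ :=
    (memLp_two_iff_integrable_sq hA.aestronglyMeasurable).mp hA
  have hB2 : Integrable (fun z => B z ^ 2) γ :=
    (memLp_two_iff_integrable_sq hB.aestronglyMeasurable).mp hB
  have hiX : ∫ z : ℝ × ℝ, z.1 ∂γ = μ₁ := by
    calc ∫ z : ℝ × ℝ, z.1 ∂γ = ∫ x, x ∂(γ.map Prod.fst) :=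
          (integral_map hmfst aestronglyMeasurable_id).symm
      _ = μ₁ := by rw [hγ₁]; exact aux_integral_id μ₁ hv₁
  have hiY : ∫ z : ℝ × ℝ, z.2 ∂γ = μ₂ := by
    calc ∫ z : ℝ × ℝ, z.2 ∂γ = ∫ x, x ∂(γ.map Prod.snd) :=
          (integral_map hmsnd aestronglyMeasurable_id).symm
      _ = μ₂ := by rw [hγ₂]; exact aux_integral_id μ₂ hv₂
  have hiA : ∫ z, A z ∂γ = 0 := by
    rw [hAdef]
    rw [integral_sub (hX.integrable one_le_two) (integrable_const μ₁), hiX]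
    simp
  have hiB : ∫ z, B z ∂γ = 0 := by
    rw [hBdef]
    rw [integral_sub (hY.integrable one_le_two) (integrable_const μ₂), hiY]
    simp
  have hiA2 : ∫ z, A z ^ 2 ∂γ = v₁ := by
    have hm : AEStronglyMeasurable (fun x : ℝ => (x - μ₁) ^ 2) (γ.map Prod.fst) :=
      (continuous_id.sub continuous_const).pow 2 |>.aestronglyMeasurable
    calc ∫ z, A z ^ 2 ∂γ = ∫ x, (x - μ₁) ^ 2 ∂(γ.map Prod.fst) :=
          (integral_map hmfst hm).symm
      _ = v₁ := by rw [hγ₁]; exact aux_integral_sq' μ₁ hv₁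
  have hiB2 : ∫ z, B z ^ 2 ∂γ = v₂ := by
    have hm : AEStronglyMeasurable (fun x : ℝ => (x - μ₂) ^ 2) (γ.map Prod.snd) :=
      (continuous_id.sub continuous_const).pow 2 |>.aestronglyMeasurable
    calc ∫ z, B z ^ 2 ∂γ = ∫ x, (x - μ₂) ^ 2 ∂(γ.map Prod.snd) :=
          (integral_map hmsnd hm).symm
      _ = v₂ := by rw [hγ₂]; exact aux_integral_sq' μ₂ hv₂
  have hAB : Integrable (fun z => A z * B z) γ := by
    refine Integrable.mono' ((hA2.add hB2).div_const 2)
      (hA.aestronglyMeasurable.mul hB.aestronglyMeasurable)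
      (Filter.Eventually.of_forall fun z => ?_)
    rw [Real.norm_eq_abs, abs_mul]
    simp only [Pi.add_apply, Pi.div_apply]
    have h := sq_nonneg (|A z| - |B z|)
    rw [sub_sq, sq_abs, sq_abs] at h
    simp only [hAdef, hBdef] at h ⊢
    linarith
  have hCS : ∫ z, A z * B z ∂γ ≤ σ₁ * σ₂ := by
    have habs : Integrable (fun z => |A z| * |B z|) γ :=
      hAB.abs.congr (Filter.Eventually.of_forall fun z => abs_mul _ _)
    have h1 : ∫ z, A z * B z ∂γ ≤ ∫ z, |A z| * |B z| ∂γ := by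
      refine integral_mono hAB habs fun z => ?_
      calc A z * B z ≤ |A z * B z| := le_abs_self _
        _ = |A z| * |B z| := abs_mul _ _
    have hpq : Real.HolderConjugate 2 2 := Real.HolderConjugate.two_two
    have hmemA : MemLp (fun z => |A z|) (ENNReal.ofReal 2) γ := by
      rw [show ENNReal.ofReal 2 = 2 by norm_num]
      exact hA.abs
    have hmemB : MemLp (fun z => |B z|) (ENNReal.ofReal 2) γ := by
      rw [show ENNReal.ofReal 2 = 2 by norm_num]
      exact hB.abs
    have h2 := integral_mul_le_Lp_mul_Lq_of_nonneg hpq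
      (Filter.Eventually.of_forall fun z => abs_nonneg (A z))
      (Filter.Eventually.of_forall fun z => abs_nonneg (B z)) hmemA hmemB
    have hA2' : ∫ z, |A z| ^ (2:ℝ) ∂γ = (v₁:ℝ) := by
      rw [← hiA2]
      refine integral_congr_ae (Filter.Eventually.of_forall fun z => ?_)
      show |A z| ^ (2:ℝ) = A z ^ 2
      rw [Real.rpow_two, sq_abs]
    have hB2' : ∫ z, |B z| ^ (2:ℝ) ∂γ = (v₂:ℝ) := by
      rw [← hiB2]
      refine integral_congr_ae (Filter.Eventually.of_forall fun z => ?_)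
      show |B z| ^ (2:ℝ) = B z ^ 2
      rw [Real.rpow_two, sq_abs]
    rw [hA2', hB2'] at h2
    have hv1r : ((v₁:ℝ)) ^ (1/(2:ℝ)) = σ₁ := by
      rw [hσ₁, Real.sqrt_eq_rpow]
    have hv2r : ((v₂:ℝ)) ^ (1/(2:ℝ)) = σ₂ := by
      rw [hσ₂, Real.sqrt_eq_rpow]
    rw [hv1r, hv2r] at h2
    exact h1.trans h2
  have hXY2 : Integrable (fun z : ℝ × ℝ => (z.1 - z.2) ^ 2) γ := by
    have h := hX.sub hY
    exact (memLp_two_iff_integrable_sq h.aestronglyMeasurable).mp h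
  have hexp : ∫ z : ℝ × ℝ, (z.1 - z.2) ^ 2 ∂γ
      = (v₁:ℝ) + v₂ + (μ₁ - μ₂) ^ 2 - 2 * ∫ z, A z * B z ∂γ := by
    have e : (fun z : ℝ × ℝ => (z.1 - z.2) ^ 2)
        = fun z => (A z ^ 2 + B z ^ 2 + (μ₁ - μ₂) ^ 2 + 2 * (μ₁ - μ₂) * A z
            - 2 * (μ₁ - μ₂) * B z) - 2 * (A z * B z) := by
      funext z
      rw [hAdef, hBdef]
      ring
    have hiA1 : Integrable A γ := hA.integrable one_le_two
    have hiB1 : Integrable B γ := hB.integrable one_le_two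
    have i0 : Integrable (fun z => A z ^ 2 + B z ^ 2) γ := hA2.add hB2
    have i1 : Integrable (fun z => A z ^ 2 + B z ^ 2 + (μ₁ - μ₂) ^ 2) γ :=
      i0.add (integrable_const _)
    have i2 : Integrable (fun z => 2 * (μ₁ - μ₂) * A z) γ := hiA1.const_mul _
    have i3 : Integrable (fun z => 2 * (μ₁ - μ₂) * B z) γ := hiB1.const_mul _
    have i4 : Integrable (fun z => A z ^ 2 + B z ^ 2 + (μ₁ - μ₂) ^ 2
        + 2 * (μ₁ - μ₂) * A z) γ := i1.add i2
    have i5 : Integrable (fun z => A z ^ 2 + B z ^ 2 + (μ₁ - μ₂) ^ 2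
        + 2 * (μ₁ - μ₂) * A z - 2 * (μ₁ - μ₂) * B z) γ := i4.sub i3
    have i6 : Integrable (fun z => 2 * (A z * B z)) γ := hAB.const_mul 2
    rw [e, integral_sub i5 i6, integral_sub i4 i3, integral_add i1 i2,
      integral_add i0 (integrable_const _), integral_add hA2 hB2,
      integral_const_mul, integral_const_mul, integral_const_mul,
      hiA, hiB, hiA2, hiB2, integral_const]
    simp [measure_univ]
  have hnn : 0 ≤ᵐ[γ] fun z : ℝ × ℝ => (z.1 - z.2) ^ 2 :=
    Filter.Eventually.of_forall fun z => sq_nonneg _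
  rw [← ofReal_integral_eq_lintegral_ofReal hXY2 hnn]
  apply ENNReal.ofReal_le_ofReal
  have hs1 : σ₁ ^ 2 = v₁ := by rw [hσ₁]; exact Real.sq_sqrt v₁.coe_nonneg
  have hs2 : σ₂ ^ 2 = v₂ := by rw [hσ₂]; exact Real.sq_sqrt v₂.coe_nonneg
  rw [hexp]
  nlinarith [hCS, hs1, hs2]
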